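/- Let ρ : ℝ → ℝ be nonnegative and locally integrable with F(s) := ∫₀ˢ ρ(u) du unbounded above, and let D(x) := inf{ y ∈ ℝ | F(y) > x } for x ≥ 0. If x ≥ 0 is such that ρ is continuous at D(x) and ρ(D(x)) > 0, then the right derivative of D at x exists and equals 1/ρ(D(x)), i.e. lim_{h↓0} (D(x+h) − D(x))/h = 1/ρ(D(x)). -/

import Mathlib

open MeasureTheory Set Filter Topology

/-- If `ρ` is continuous and positive at `D x`, then the right derivative of `D` at
`x` exists and equals `1 / ρ (D x)`. -/
theorem stmt_2 (ρ : ℝ → ℝ) (hρ_nonneg : ∀ u, 0 ≤ ρ u)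
    (hρ_loc : LocallyIntegrable ρ volume)
    (F D : ℝ → ℝ)
    (hF : ∀ s, F s = ∫ u in (0:ℝ)..s, ρ u)
    (hF_unbdd : ∀ M : ℝ, ∃ s, F s > M)
    (hD : ∀ x, 0 ≤ x → D x = sInf {y : ℝ | F y > x})
    (x : ℝ) (hx : 0 ≤ x)
    (hcont : ContinuousAt ρ (D x)) (hpos : 0 < ρ (D x)) :
    Tendsto (fun h => (D (x + h) - D x) / h) (𝓝[>] 0) (𝓝 (1 / ρ (D x))) := by
  have hInt : ∀ a b : ℝ, IntervalIntegrable ρ volume a b := by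
    intro a b
    rw [intervalIntegrable_iff]
    exact (hρ_loc.integrableOn_isCompact isCompact_uIcc).mono_set Ioc_subset_Icc_self
  have hFsub : ∀ a b : ℝ, F b - F a = ∫ u in a..b, ρ u := by
    intro a b
    rw [hF a, hF b, intervalIntegral.integral_interval_sub_left (hInt 0 b) (hInt 0 a)]
  have hFmono : Monotone F := by
    intro a b hab
    have h0 : 0 ≤ F b - F a := by
      rw [hFsub a b]
      exact intervalIntegral.integral_nonneg hab fun u _ => hρ_nonneg u
    linarith
  have hFcont : Continuous F := by
    have h := intervalIntegral.continuous_primitive hInt 0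
    have hFe : F = fun s => ∫ u in (0:ℝ)..s, ρ u := funext hF
    rw [hFe]; exact h
  have hF0 : F 0 = 0 := by rw [hF 0, intervalIntegral.integral_same]
  have hD0 : D x = sInf {y : ℝ | F y > x} := hD x hx
  have hS_ne : {y : ℝ | F y > x}.Nonempty := hF_unbdd x
  have hlb0 : ∀ y ∈ {y : ℝ | F y > x}, (0:ℝ) ≤ y := by
    intro y hy
    by_contra hy0
    push_neg at hy0
    have hFy : F y ≤ 0 := (hFmono hy0.le).trans_eq hF0
    exact hy.not_ge (hFy.trans hx)
  have hS_bdd : BddBelow {y : ℝ | F y > x} := ⟨0, hlb0⟩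
  -- F (D x) = x
  have hle : F (D x) ≤ x := by
    by_contra hgt
    push_neg at hgt
    have hev : ∀ᶠ y in 𝓝 (D x), x < F y :=
      (tendsto_order.1 hFcont.continuousAt).1 x hgt
    have hev' : ∀ᶠ y in 𝓝[<] (D x), x < F y := hev.filter_mono nhdsWithin_le_nhds
    obtain ⟨y, hy1, hy2⟩ := (hev'.and self_mem_nhdsWithin).exists
    have : D x ≤ y := by rw [hD0]; exact csInf_le hS_bdd hy1
    exact absurd hy2 (not_lt.2 this)
  have hgex : x ≤ F (D x) := by
    have hev : ∀ᶠ y in 𝓝[>] (D x), x ≤ F y := by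
      filter_upwards [self_mem_nhdsWithin] with y hy
      have hy' : sInf {y : ℝ | F y > x} < y := by rw [← hD0]; exact hy
      obtain ⟨z, hzS, hzy⟩ := exists_lt_of_csInf_lt hS_ne hy'
      exact hzS.le.trans (hFmono hzy.le)
    exact ge_of_tendsto (hFcont.continuousAt.mono_left nhdsWithin_le_nhds) hev
  have hFd : F (D x) = x := le_antisymm hle hgex
  -- strict derivative of F at D x
  have hstrict : HasStrictDerivAt F (ρ (D x)) (D x) := by
    rw [hasStrictDerivAt_iff_hasStrictFDerivAt, hasStrictFDerivAt_iff_isLittleO,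
      Asymptotics.isLittleO_iff]
    intro c hc
    obtain ⟨δ, hδpos, hδ⟩ := Metric.continuousAt_iff.1 hcont c hc
    have hmem : Metric.ball (D x) δ ×ˢ Metric.ball (D x) δ ∈ 𝓝 ((D x, D x) : ℝ × ℝ) :=
      prod_mem_nhds (Metric.ball_mem_nhds _ hδpos) (Metric.ball_mem_nhds _ hδpos)
    filter_upwards [hmem] with p hp
    obtain ⟨hp1, hp2⟩ := hp
    rw [Metric.mem_ball, Real.dist_eq, abs_lt] at hp1 hp2
    have hbound : ∀ u ∈ Set.uIoc p.2 p.1, ‖ρ u - ρ (D x)‖ ≤ c := by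
      intro u hu
      rw [Set.uIoc, Set.mem_Ioc] at hu
      have hud : dist u (D x) < δ := by
        rw [Real.dist_eq, abs_lt]
        have hmin : D x - δ < p.2 ⊓ p.1 := lt_inf_iff.2 ⟨by linarith, by linarith⟩
        have hmax : p.2 ⊔ p.1 < D x + δ := sup_lt_iff.2 ⟨by linarith, by linarith⟩
        constructor
        · linarith [hu.1]
        · linarith [hu.2]
      have := hδ hud
      rw [Real.dist_eq] at this
      rw [Real.norm_eq_abs]
      exact this.le
    have heq : F p.1 - F p.2 - (ContinuousLinearMap.toSpanSingleton ℝ (ρ (D x)))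
        (p.1 - p.2) = ∫ u in p.2..p.1, (ρ u - ρ (D x)) := by
      rw [intervalIntegral.integral_sub (hInt _ _) intervalIntegrable_const,
        intervalIntegral.integral_const, ← hFsub p.2 p.1]
      simp [smul_eq_mul, mul_comm]
    rw [heq]
    calc ‖∫ u in p.2..p.1, (ρ u - ρ (D x))‖ ≤ c * |p.1 - p.2| :=
          intervalIntegral.norm_integral_le_of_norm_le_const hbound
      _ = c * ‖p.1 - p.2‖ := by rw [Real.norm_eq_abs]
  have hne : ρ (D x) ≠ 0 := ne_of_gt hpos
  -- local inverse
  set g : ℝ → ℝ := HasStrictDerivAt.localInverse F (ρ (D x)) (D x) hstrict hne with hgdef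
  have hgx : g x = D x := by
    have h := (hstrict.hasStrictFDerivAt_equiv hne).localInverse_apply_image
    rw [hFd] at h
    exact h
  have hrev : ∀ᶠ w in 𝓝 x, F (g w) = w := by
    have h := (hstrict.hasStrictFDerivAt_equiv hne).eventually_right_inverse
    rw [hFd] at h
    exact h
  have hgc : ContinuousAt g x := by
    have h := (hstrict.hasStrictFDerivAt_equiv hne).localInverse_continuousAt
    rw [hFd] at h
    exact h
  have hgd : HasDerivAt g (ρ (D x))⁻¹ x := by
    have h := HasStrictDerivAt.to_localInverse (hf := hstrict) (hf' := hne)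
    rw [hFd] at h
    exact h.hasDerivAt
  -- positivity of ρ near D x
  obtain ⟨δ, hδpos, hδbd⟩ := Metric.continuousAt_iff.1 hcont (ρ (D x) / 2) (by linarith)
  have hρlow : ∀ u, |u - D x| < δ → ρ (D x) / 2 ≤ ρ u := by
    intro u hu
    have h := hδbd (show dist u (D x) < δ by rwa [Real.dist_eq])
    rw [Real.dist_eq, abs_lt] at h
    linarith [h.1]
  -- key: local characterization of the infimum
  have key : ∀ w, |w - D x| < δ → ∀ x' : ℝ, F w = x' → sInf {y : ℝ | F y > x'} = w := by
    intro w hw x' hwx'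
    have hlb : ∀ y ∈ {y : ℝ | F y > x'}, w ≤ y := by
      intro y hy
      by_contra hyl
      push_neg at hyl
      exact hy.not_ge (le_of_le_of_eq (hFmono hyl.le) hwx')
    have hne' : {y : ℝ | F y > x'}.Nonempty := hF_unbdd x'
    refine le_antisymm (le_of_forall_pos_le_add ?_) (le_csInf hne' hlb)
    intro t ht
    rw [abs_lt] at hw
    have hmemS : w + t ∈ {y : ℝ | F y > x'} := by
      set m := min (w + t) ((w + (D x + δ)) / 2) with hm
      have hwm : w < m := lt_min (by linarith) (by linarith)
      have hmlt : m < D x + δ := (min_le_right _ _).trans_lt (by linarith)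
      have hint : ∫ u in w..m, (ρ (D x) / 2) ≤ ∫ u in w..m, ρ u := by
        apply intervalIntegral.integral_mono_on hwm.le intervalIntegrable_const (hInt w m)
        intro u hu
        apply hρlow
        rw [abs_lt]
        exact ⟨by linarith [hu.1], by linarith [hu.2]⟩
      rw [intervalIntegral.integral_const, ← hFsub w m, smul_eq_mul] at hint
      have hmono2 : F m ≤ F (w + t) := hFmono (min_le_left _ _)
      have hposm : 0 < (m - w) * (ρ (D x) / 2) := mul_pos (by linarith) (by linarith)
      show x' < F (w + t)
      rw [← hwx']
      linarith
    exact csInf_le ⟨w, hlb⟩ hmemS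
  -- transfer along h ↦ x + h
  have htx : Tendsto (fun h : ℝ => x + h) (𝓝[>] 0) (𝓝 x) := by
    have h : Tendsto (fun h : ℝ => x + h) (𝓝 0) (𝓝 (x + 0)) :=
      tendsto_const_nhds.add tendsto_id
    rw [add_zero] at h
    exact h.mono_left nhdsWithin_le_nhds
  have hgt : Tendsto (fun h : ℝ => g (x + h)) (𝓝[>] 0) (𝓝 (D x)) := by
    have h := hgc.tendsto.comp htx
    rwa [hgx] at h
  have hevδ : ∀ᶠ h in 𝓝[>] 0, |g (x + h) - D x| < δ := by
    have hb : ∀ᶠ y in 𝓝 (D x), |y - D x| < δ := by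
      filter_upwards [Metric.ball_mem_nhds (D x) hδpos] with y hy
      rwa [Metric.mem_ball, Real.dist_eq] at hy
    exact hgt.eventually hb
  have hevF : ∀ᶠ h in 𝓝[>] 0, F (g (x + h)) = x + h := htx.eventually hrev
  have heqD : ∀ᶠ h in 𝓝[>] 0, D (x + h) = g (x + h) := by
    filter_upwards [hevδ, hevF, self_mem_nhdsWithin] with h h1 h2 h3
    have h3' : (0:ℝ) < h := h3
    rw [hD (x + h) (by linarith)]
    exact key _ h1 _ h2
  have hmap : Tendsto (fun h : ℝ => x + h) (𝓝[>] 0) (𝓝[≠] x) := by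
    apply tendsto_nhdsWithin_of_tendsto_nhds_of_eventually_within _ htx
    filter_upwards [self_mem_nhdsWithin] with h hh
    have hh' : (0:ℝ) < h := hh
    simp only [mem_compl_iff, mem_singleton_iff]
    intro hc
    have : h = 0 := by linarith [congrArg (fun z => z - x) hc]
    exact absurd this (ne_of_gt hh')
  have hslope := hasDerivAt_iff_tendsto_slope.1 hgd
  have hcomp := hslope.comp hmap
  have hfinal : Tendsto (fun h : ℝ => (g (x + h) - g x) / h) (𝓝[>] 0) (𝓝 (ρ (D x))⁻¹) := by
    refine hcomp.congr fun h => ?_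
    simp only [Function.comp_apply, slope_def_field, add_sub_cancel_left]
  rw [one_div]
  refine hfinal.congr' ?_
  filter_upwards [heqD] with h h1
  rw [h1, hgx]
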